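/- For all positive integers n, d, k: H_s(kn, kd) ≥ H_s(n,d)^k / 2^{k−1}, where H_s(n,d) is the maximum adjacency-graph diameter of strongly connected pure (d−1)-complexes on n vertices. -/

import Mathlib

open Finset

/-- The adjacency (dual) graph of a pure simplicial complex, given by its set of
facets: two facets are adjacent iff they differ in exactly one element. -/
def adjGraph {V : Type*} [DecidableEq V] (C : Finset (Finset V)) :
    SimpleGraph {X // X ∈ C} where
  Adj X Y := (X.1 \ Y.1).card = 1 ∧ (Y.1 \ X.1).card = 1
  symm := ⟨fun X Y h => ⟨h.2, h.1⟩⟩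
  loopless := ⟨fun X h => by simp at h⟩

/-- `Hs n d` : maximum diameter of the adjacency graph among all strongly
connected pure `(d-1)`-dimensional simplicial complexes on `n` vertices. -/
noncomputable def Hs (n d : ℕ) : ℕ :=
  sSup {δ | ∃ C : Finset (Finset (Fin n)),
    (∀ X ∈ C, X.card = d) ∧ (adjGraph C).Connected ∧ (adjGraph C).diam = δ}

/-- A corridor structure: the adjacency graph is a path of length `L`. -/
def Corridor {V : Type*} [DecidableEq V] (C : Finset (Finset V)) (L : ℕ) : Prop :=
  ∃ f : Fin (L + 1) → {X // X ∈ C}, Function.Bijective f ∧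
    ∀ i j : Fin (L + 1), (adjGraph C).Adj (f i) (f j) ↔ (j.1 = i.1 + 1 ∨ i.1 = j.1 + 1)

variable {V : Type*} [DecidableEq V] {C : Finset (Finset V)} {L : ℕ}

lemma Corridor.connected (h : Corridor C L) : (adjGraph C).Connected := by
  obtain ⟨f, hbij, hadj⟩ := h
  have hne : Nonempty {X // X ∈ C} := ⟨f 0⟩
  rw [SimpleGraph.connected_iff]
  refine ⟨fun x y => ?_, hne⟩
  obtain ⟨i, rfl⟩ := hbij.2 x
  obtain ⟨j, rfl⟩ := hbij.2 y
  have key : ∀ m : ℕ, ∀ hm : m ≤ L, (adjGraph C).Reachable (f 0) (f ⟨m, by omega⟩) := by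
    intro m
    induction m with
    | zero => intro _; rfl
    | succ p ih =>
      intro hm
      have h1 : (adjGraph C).Adj (f ⟨p, by omega⟩) (f ⟨p + 1, by omega⟩) := by
        rw [hadj]; left; rfl
      exact (ih (by omega)).trans h1.reachable
  have h1 := key i.1 (by omega)
  have h2 := key j.1 (by omega)
  have : (⟨i.1, by omega⟩ : Fin (L+1)) = i := rfl
  rw [this] at h1
  have : (⟨j.1, by omega⟩ : Fin (L+1)) = j := rfl
  exact h1.symm.trans h2

private lemma walk_len {f : Fin (L + 1) → {X // X ∈ C}} (hbij : Function.Bijective f)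
    (hadj : ∀ i j : Fin (L + 1),
      (adjGraph C).Adj (f i) (f j) ↔ (j.1 = i.1 + 1 ∨ i.1 = j.1 + 1)) :
    ∀ {x y : {X // X ∈ C}} (w : (adjGraph C).Walk x y) (a b : Fin (L + 1)),
      x = f a → y = f b → (a.1 - b.1 ≤ w.length ∧ b.1 - a.1 ≤ w.length) := by
  intro x y w
  induction w with
  | nil =>
    intro a b ha hb
    have : f a = f b := by rw [← ha, hb]
    have := hbij.1 this
    subst this
    simp
  | @cons u v y hadj' p ih =>
    intro a b ha hb
    obtain ⟨c, hc⟩ := hbij.2 v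
    have h1 : (adjGraph C).Adj (f a) (f c) := by rw [← ha, hc]; exact hadj'
    rw [hadj] at h1
    have h2 := ih c b hc.symm hb
    simp only [SimpleGraph.Walk.length_cons]
    omega

lemma Corridor.le_diam (h : Corridor C L) : L ≤ (adjGraph C).diam := by
  obtain ⟨f, hbij, hadj⟩ := h
  have hconn : (adjGraph C).Connected := Corridor.connected ⟨f, hbij, hadj⟩
  have hne : Nonempty {X // X ∈ C} := ⟨f 0⟩
  -- ediam ≠ ⊤
  have hfin : Finite {X // X ∈ C} := by infer_instance
  obtain ⟨u, v, huv⟩ := SimpleGraph.exists_edist_eq_ediam_of_finite (G := adjGraph C)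
  have hntop : (adjGraph C).ediam ≠ ⊤ := by
    rw [← huv]
    rw [SimpleGraph.edist_ne_top_iff_reachable]
    exact hconn u v
  -- dist between endpoints is ≥ L
  have hreach := hconn (f ⟨0, by omega⟩) (f ⟨L, by omega⟩)
  obtain ⟨w, hw⟩ := hreach.exists_walk_length_eq_dist
  have := walk_len hbij hadj w ⟨0, by omega⟩ ⟨L, by omega⟩ rfl rfl
  have hv0 : ((⟨0, by omega⟩ : Fin (L+1))).1 = 0 := rfl
  have hvL : ((⟨L, by omega⟩ : Fin (L+1))).1 = L := rfl
  have hL : L ≤ (adjGraph C).dist (f ⟨0, by omega⟩) (f ⟨L, by omega⟩) := by omega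
  exact hL.trans (SimpleGraph.dist_le_diam hntop)

section geodesic
variable {W : Type*} {G : SimpleGraph W} {u v : W}

lemma exists_walk_getVert (p : G.Walk u v) {a b : ℕ} (hab : a ≤ b) (hb : b ≤ p.length) :
    ∃ w : G.Walk (p.getVert a) (p.getVert b), w.length = b - a := by
  induction b with
  | zero =>
    have : a = 0 := by omega
    subst this
    exact ⟨SimpleGraph.Walk.nil, rfl⟩
  | succ m ih =>
    rcases Nat.eq_or_lt_of_le hab with rfl | h
    · exact ⟨SimpleGraph.Walk.nil, by simp⟩
    · obtain ⟨w, hw⟩ := ih (by omega) (by omega)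
      have hadj : G.Adj (p.getVert m) (p.getVert (m + 1)) := p.adj_getVert_succ (by omega)
      exact ⟨w.concat hadj, by simp [SimpleGraph.Walk.length_concat, hw]; omega⟩

lemma geodesic_dist (p : G.Walk u v) (hp : p.length = G.dist u v) {i j : ℕ}
    (hij : i ≤ j) (hj : j ≤ p.length) :
    G.dist (p.getVert i) (p.getVert j) = j - i := by
  obtain ⟨w2', hw2'⟩ := exists_walk_getVert p hij hj
  have hub : G.dist (p.getVert i) (p.getVert j) ≤ j - i := hw2' ▸ SimpleGraph.dist_le w2'
  obtain ⟨w1, hw1⟩ := exists_walk_getVert p (Nat.zero_le i) (hij.trans hj)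
  obtain ⟨w3, hw3⟩ := exists_walk_getVert p hj (le_refl p.length)
  obtain ⟨w2, hw2⟩ := (SimpleGraph.Walk.reachable w2').exists_walk_length_eq_dist
  have hget0 : p.getVert 0 = u := p.getVert_zero
  have hgetl : p.getVert p.length = v := p.getVert_length
  have hd : G.dist u v ≤ i + G.dist (p.getVert i) (p.getVert j) + (p.length - j) := by
    have := SimpleGraph.dist_le ((w1.copy hget0 rfl).append (w2.append (w3.copy rfl hgetl)))
    simp only [SimpleGraph.Walk.length_append, SimpleGraph.Walk.length_copy] at this
    omega
  omega

end geodesic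

lemma Hs_bddAbove (n d : ℕ) : BddAbove {δ | ∃ C : Finset (Finset (Fin n)),
    (∀ X ∈ C, X.card = d) ∧ (adjGraph C).Connected ∧ (adjGraph C).diam = δ} := by
  refine ⟨2 ^ n, ?_⟩
  rintro δ ⟨C, -, hconn, rfl⟩
  have hne : Nonempty {X // X ∈ C} := hconn.nonempty
  obtain ⟨u, v, huv⟩ := SimpleGraph.exists_dist_eq_diam (G := adjGraph C)
  obtain ⟨p, hpath, hlen⟩ := (hconn u v).exists_path_of_dist
  have hlt := hpath.length_lt
  have hcard : Fintype.card {X // X ∈ C} = C.card := Fintype.card_coe C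
  have hcard2 : C.card ≤ 2 ^ n := by
    have := Finset.card_le_univ C
    simpa [Fintype.card_finset] using this
  omega

lemma le_Hs {n d L : ℕ} (C : Finset (Finset (Fin n))) (hcard : ∀ X ∈ C, X.card = d)
    (hcor : Corridor C L) : L ≤ Hs n d := by
  have h1 : (adjGraph C).diam ∈ {δ | ∃ C : Finset (Finset (Fin n)),
      (∀ X ∈ C, X.card = d) ∧ (adjGraph C).Connected ∧ (adjGraph C).diam = δ} :=
    ⟨C, hcard, hcor.connected, rfl⟩
  exact hcor.le_diam.trans (le_csSup (Hs_bddAbove n d) h1)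

lemma exists_corridor_Hs {n d : ℕ} (h : 0 < Hs n d) :
    ∃ C : Finset (Finset (Fin n)), (∀ X ∈ C, X.card = d) ∧ Corridor C (Hs n d) := by
  set S := {δ | ∃ C : Finset (Finset (Fin n)),
    (∀ X ∈ C, X.card = d) ∧ (adjGraph C).Connected ∧ (adjGraph C).diam = δ} with hS
  have hne : S.Nonempty := by
    by_contra hcon
    rw [Set.not_nonempty_iff_eq_empty] at hcon
    have : Hs n d = 0 := by rw [Hs, ← hS, hcon]; simp
    omega
  have hmem : Hs n d ∈ S := Nat.sSup_mem hne (Hs_bddAbove n d)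
  obtain ⟨C, hcard, hconn, hdiam⟩ := hmem
  have hne' : Nonempty {X // X ∈ C} := hconn.nonempty
  obtain ⟨u, v, huv⟩ := SimpleGraph.exists_dist_eq_diam (G := adjGraph C)
  obtain ⟨p, hlen⟩ := (hconn u v).exists_walk_length_eq_dist
  set δ := Hs n d with hδ
  have hplen : p.length = δ := by rw [hlen, huv, hdiam]
  -- the corridor along the geodesic
  refine ⟨Finset.image (fun i : Fin (δ + 1) => (p.getVert i.1).1) Finset.univ, ?_, ?_⟩
  · intro X hX
    simp only [Finset.mem_image] at hX
    obtain ⟨i, -, rfl⟩ := hX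
    exact hcard _ (p.getVert i.1).2
  · refine ⟨fun i => ⟨(p.getVert i.1).1, Finset.mem_image_of_mem _ (Finset.mem_univ i)⟩,
      ⟨?_, ?_⟩, ?_⟩
    · -- injective
      intro i j hij
      simp only [Subtype.mk.injEq] at hij
      have hgv : p.getVert i.1 = p.getVert j.1 := Subtype.ext hij
      rcases le_total i.1 j.1 with h' | h'
      · have := geodesic_dist p hlen h' (by have := i.isLt; have := j.isLt; omega)
        rw [hgv, SimpleGraph.dist_self] at this
        exact Fin.ext (by omega)
      · have := geodesic_dist p hlen h' (by have := i.isLt; have := j.isLt; omega)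
        rw [← hgv, SimpleGraph.dist_self] at this
        exact Fin.ext (by omega)
    · -- surjective
      rintro ⟨X, hX⟩
      simp only [Finset.mem_image] at hX
      obtain ⟨i, -, hi⟩ := hX
      exact ⟨i, Subtype.ext hi⟩
    · -- adjacency iff consecutive
      intro i j
      constructor
      · intro hadj
        have hadj' : (adjGraph C).Adj (p.getVert i.1) (p.getVert j.1) := ⟨hadj.1, hadj.2⟩
        have hd1 : (adjGraph C).dist (p.getVert i.1) (p.getVert j.1) = 1 :=
          SimpleGraph.dist_eq_one_iff_adj.mpr hadj'
        rcases le_total i.1 j.1 with h' | h'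
        · have := geodesic_dist p hlen h' (by have := i.isLt; have := j.isLt; omega)
          omega
        · have := geodesic_dist p hlen h' (by have := i.isLt; have := j.isLt; omega)
          rw [SimpleGraph.dist_comm] at hd1
          omega
      · rintro (hji | hij)
        · have := p.adj_getVert_succ (i := i.1) (by have := j.isLt; omega)
          rw [← hji] at this
          exact ⟨this.1, this.2⟩
        · have := p.adj_getVert_succ (i := j.1) (by have := i.isLt; omega)
          rw [← hij] at this
          exact ⟨this.2, this.1⟩

/-! ### Snake in the grid -/

def scol (L1 b o : ℕ) : ℕ :=
  if o ≤ L1 then (if b % 2 = 0 then o else L1 - o) else (if b % 2 = 0 then L1 else 0)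

def srow (L1 b o : ℕ) : ℕ := if o ≤ L1 then 2 * b else 2 * b + 1

lemma scol_le (L1 b o : ℕ) : scol L1 b o ≤ L1 := by
  simp only [scol]; split_ifs <;> omega

lemma snake_inj {L1 b o b' o' : ℕ} (ho : o < L1 + 2) (ho' : o' < L1 + 2)
    (h1 : scol L1 b o = scol L1 b' o') (h2 : srow L1 b o = srow L1 b' o') :
    b = b' ∧ o = o' := by
  simp only [scol, srow] at h1 h2; split_ifs at h1 h2 <;> omega

lemma snake_adj {L1 b o b' o' : ℕ} (ho : o < L1 + 2) (ho' : o' < L1 + 2) :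
    ((scol L1 b o = scol L1 b' o' ∧
        (srow L1 b o = srow L1 b' o' + 1 ∨ srow L1 b' o' = srow L1 b o + 1)) ∨
      (srow L1 b o = srow L1 b' o' ∧
        (scol L1 b o = scol L1 b' o' + 1 ∨ scol L1 b' o' = scol L1 b o + 1))) ↔
    ((b = b' ∧ (o = o' + 1 ∨ o' = o + 1)) ∨ (b' = b + 1 ∧ o = L1 + 1 ∧ o' = 0) ∨
      (b = b' + 1 ∧ o' = L1 + 1 ∧ o = 0)) := by
  simp only [scol, srow]; split_ifs <;> first | omega | (simp_all; omega) | simp_all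

lemma block_unique {P b o b' o' : ℕ} (ho : o < P) (ho' : o' < P)
    (h : b * P + o = b' * P + o') : b = b' ∧ o = o' := by
  rcases Nat.lt_trichotomy b b' with h1 | h1 | h1
  · exfalso
    have h2 : (b + 1) * P ≤ b' * P := Nat.mul_le_mul_right P (by omega)
    rw [Nat.succ_mul] at h2
    generalize b * P = x at h h2
    generalize b' * P = y at h h2
    omega
  · subst h1
    refine ⟨rfl, ?_⟩
    generalize b * P = x at h
    omega
  · exfalso
    have h2 : (b' + 1) * P ≤ b * P := Nat.mul_le_mul_right P (by omega)
    rw [Nat.succ_mul] at h2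
    generalize b * P = x at h h2
    generalize b' * P = y at h h2
    omega

lemma consec_iff {L1 t t' b o b' o' : ℕ} (ht : t = b * (L1 + 2) + o) (ho : o < L1 + 2)
    (ht' : t' = b' * (L1 + 2) + o') (ho' : o' < L1 + 2) :
    (t' = t + 1 ∨ t = t' + 1) ↔
    ((b = b' ∧ (o = o' + 1 ∨ o' = o + 1)) ∨ (b' = b + 1 ∧ o = L1 + 1 ∧ o' = 0) ∨
      (b = b' + 1 ∧ o' = L1 + 1 ∧ o = 0)) := by
  constructor
  · rintro (rfl | rfl)
    · -- t' = t + 1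
      by_cases hcase : o + 1 < L1 + 2
      · have : b' * (L1+2) + o' = b * (L1+2) + (o+1) := by omega
        obtain ⟨rfl, rfl⟩ := block_unique ho' hcase this
        left; exact ⟨rfl, Or.inr rfl⟩
      · have hoeq : o = L1 + 1 := by omega
        have : b' * (L1+2) + o' = (b+1) * (L1+2) + 0 := by
          rw [Nat.succ_mul]; omega
        obtain ⟨rfl, rfl⟩ := block_unique ho' (by omega) this
        right; left; exact ⟨rfl, hoeq, rfl⟩
    · by_cases hcase : o' + 1 < L1 + 2
      · have : b * (L1+2) + o = b' * (L1+2) + (o'+1) := by omega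
        obtain ⟨rfl, rfl⟩ := block_unique ho hcase this
        left; exact ⟨rfl, Or.inl rfl⟩
      · have hoeq : o' = L1 + 1 := by omega
        have : b * (L1+2) + o = (b'+1) * (L1+2) + 0 := by
          rw [Nat.succ_mul]; omega
        obtain ⟨rfl, rfl⟩ := block_unique ho (by omega) this
        right; right; exact ⟨rfl, hoeq, rfl⟩
  · rintro (⟨rfl, rfl | rfl⟩ | ⟨rfl, rfl, rfl⟩ | ⟨rfl, rfl, rfl⟩)
    · right; generalize b * (L1+2) = x at *; omega
    · left; generalize b * (L1+2) = x at *; omega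
    · left; rw [Nat.succ_mul] at ht'; generalize b * (L1+2) = x at *; omega
    · right; rw [Nat.succ_mul] at ht; generalize b' * (L1+2) = x at *; omega

/-! ### Join of two corridors -/

section join
variable {a b : ℕ}

private def e1 (a b : ℕ) : Fin a ↪ Fin (a + b) := (Fin.castAddOrderEmb b).toEmbedding
private def e2 (a b : ℕ) : Fin b ↪ Fin (a + b) := (Fin.natAddOrderEmb a).toEmbedding

private lemma disj_maps (X : Finset (Fin a)) (Y : Finset (Fin b)) :
    Disjoint (X.map (e1 a b)) (Y.map (e2 a b)) := by
  rw [Finset.disjoint_left]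
  rintro x hx hy
  simp only [Finset.mem_map, e1, e2] at hx hy
  obtain ⟨i, -, rfl⟩ := hx
  obtain ⟨j, -, hj⟩ := hy
  have h1 : ((Fin.castAddOrderEmb b).toEmbedding i : ℕ) = i.1 := by
    simp [Fin.castAddOrderEmb]
  have h2 : ((Fin.natAddOrderEmb a).toEmbedding j : ℕ) = a + j.1 := by
    simp [Fin.natAddOrderEmb]
  rw [hj, h1] at h2
  have := i.isLt
  omega

private lemma union_map_sdiff_card (X1 X2 : Finset (Fin a)) (Y1 Y2 : Finset (Fin b)) :
    ((X1.map (e1 a b) ∪ Y1.map (e2 a b)) \ (X2.map (e1 a b) ∪ Y2.map (e2 a b))).card =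
      (X1 \ X2).card + (Y1 \ Y2).card := by
  have key : ∀ {γ : Type} [DecidableEq γ] (s t u : Finset γ), Disjoint s u →
      s \ (t ∪ u) = s \ t := by
    intro γ _ s t u hdis
    ext x
    simp only [Finset.mem_sdiff, Finset.mem_union]
    constructor
    · tauto
    · intro ⟨h1, h2⟩
      exact ⟨h1, by push_neg; exact ⟨h2, Finset.disjoint_left.mp hdis h1⟩⟩
  have hsd : ∀ {γ : Type} [DecidableEq γ] (s t u : Finset γ), Disjoint s t →
      s \ (t ∪ u) = s \ u := by
    intro γ _ s t u hdis
    rw [Finset.union_comm]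
    exact key s u t hdis
  rw [Finset.union_sdiff_distrib, key _ _ _ (disj_maps X1 Y2),
    hsd _ _ _ ((disj_maps X2 Y1).symm),
    Finset.card_union_of_disjoint (Finset.disjoint_of_subset_left Finset.sdiff_subset
      (Finset.disjoint_of_subset_right Finset.sdiff_subset (disj_maps X1 Y1))),
    Finset.map_eq_image, Finset.map_eq_image, ← Finset.image_sdiff _ _ (e1 a b).injective,
    Finset.map_eq_image, Finset.map_eq_image, ← Finset.image_sdiff _ _ (e2 a b).injective,
    Finset.card_image_of_injective _ (e1 a b).injective,
    Finset.card_image_of_injective _ (e2 a b).injective]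

private lemma sdiff_card_comm {γ : Type*} [DecidableEq γ] {X1 X2 : Finset γ}
    (h : X1.card = X2.card) : (X1 \ X2).card = (X2 \ X1).card := by
  have h1 := Finset.card_sdiff_add_card_inter X1 X2
  have h2 := Finset.card_sdiff_add_card_inter X2 X1
  rw [Finset.inter_comm] at h2
  omega

end join

lemma join_corridor {a b d1 d2 L1 L2 : ℕ} {C1 : Finset (Finset (Fin a))}
    {C2 : Finset (Finset (Fin b))}
    (h1 : ∀ X ∈ C1, X.card = d1) (h2 : ∀ Y ∈ C2, Y.card = d2)
    (hc1 : Corridor C1 L1) (hc2 : Corridor C2 L2) :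
    ∃ (C : Finset (Finset (Fin (a + b)))) (L : ℕ),
      (∀ X ∈ C, X.card = d1 + d2) ∧ Corridor C L ∧ L1 * L2 ≤ 2 * L := by
  classical
  obtain ⟨f1, hbij1, hadj1⟩ := hc1
  obtain ⟨f2, hbij2, hadj2⟩ := hc2
  set R := L2 / 2 with hR
  set L := R * (L1 + 2) + L1 with hL
  have hkey : ∀ bt ot : ℕ, bt * (L1+2) + ot ≤ R * (L1+2) + L1 → ot < L1+2 →
      (ot ≤ L1 → bt ≤ R) ∧ (L1 < ot → bt + 1 ≤ R) := by
    intro bt ot hle ho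
    constructor
    · intro h; by_contra hcon
      have hm : (R+1) * (L1+2) ≤ bt * (L1+2) := Nat.mul_le_mul_right _ (by omega)
      rw [Nat.succ_mul] at hm
      omega
    · intro h; by_contra hcon
      have hm : R * (L1+2) ≤ bt * (L1+2) := Nat.mul_le_mul_right _ (by omega)
      omega
  have hdect : ∀ t : ℕ, t = (t / (L1+2)) * (L1+2) + t % (L1+2) := fun t => by
    rw [mul_comm]; exact (Nat.div_add_mod t (L1+2)).symm
  have hmodt : ∀ t : ℕ, t % (L1+2) < L1+2 := fun t => Nat.mod_lt t (by omega)
  have hcb : ∀ t : Fin (L + 1), scol L1 (t.1 / (L1+2)) (t.1 % (L1+2)) < L1 + 1 := fun t => by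
    have := scol_le L1 (t.1 / (L1+2)) (t.1 % (L1+2)); omega
  have hrb : ∀ t : Fin (L + 1), srow L1 (t.1 / (L1+2)) (t.1 % (L1+2)) < L2 + 1 := by
    intro t
    have ht := hdect t.1
    have ho := hmodt t.1
    have htL : (t : ℕ) ≤ L := by omega
    have hb := hkey (t.1 / (L1+2)) (t.1 % (L1+2)) (by omega) ho
    simp only [srow]
    split_ifs with h
    · have := hb.1 h; omega
    · have := hb.2 (by omega); omega
  set F : Fin (L + 1) → Finset (Fin (a + b)) := fun t =>
    (f1 ⟨_, hcb t⟩).1.map (e1 a b) ∪ (f2 ⟨_, hrb t⟩).1.map (e2 a b) with hF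
  have hcard_sd : ∀ t t' : Fin (L+1), (F t \ F t').card =
      ((f1 ⟨_, hcb t⟩).1 \ (f1 ⟨_, hcb t'⟩).1).card +
      ((f2 ⟨_, hrb t⟩).1 \ (f2 ⟨_, hrb t'⟩).1).card := fun t t' =>
    union_map_sdiff_card _ _ _ _
  have hxcomm : ∀ t t' : Fin (L+1),
      ((f1 ⟨_, hcb t⟩).1 \ (f1 ⟨_, hcb t'⟩).1).card =
      ((f1 ⟨_, hcb t'⟩).1 \ (f1 ⟨_, hcb t⟩).1).card := fun t t' =>
    sdiff_card_comm (by rw [h1 _ (f1 _).2, h1 _ (f1 _).2])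
  have hycomm : ∀ t t' : Fin (L+1),
      ((f2 ⟨_, hrb t⟩).1 \ (f2 ⟨_, hrb t'⟩).1).card =
      ((f2 ⟨_, hrb t'⟩).1 \ (f2 ⟨_, hrb t⟩).1).card := fun t t' =>
    sdiff_card_comm (by rw [h2 _ (f2 _).2, h2 _ (f2 _).2])
  refine ⟨Finset.image F Finset.univ, L, ?_, ?_, ?_⟩
  · -- cards
    intro X hX
    simp only [Finset.mem_image] at hX
    obtain ⟨t, -, rfl⟩ := hX
    rw [hF]
    simp only []
    rw [Finset.card_union_of_disjoint (disj_maps _ _), Finset.card_map, Finset.card_map,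
      h1 _ (f1 _).2, h2 _ (f2 _).2]
  · -- Corridor
    refine ⟨fun t => ⟨F t, Finset.mem_image_of_mem F (Finset.mem_univ t)⟩, ⟨?_, ?_⟩, ?_⟩
    · -- injective
      intro t t' h
      have hFF : F t = F t' := congrArg Subtype.val h
      have h0 : (F t \ F t').card = 0 := by rw [hFF]; simp
      have h0' : (F t' \ F t).card = 0 := by rw [hFF]; simp
      rw [hcard_sd t t'] at h0
      rw [hcard_sd t' t] at h0'
      have hXeq : (f1 ⟨_, hcb t⟩).1 = (f1 ⟨_, hcb t'⟩).1 := by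
        apply Finset.Subset.antisymm
        · rw [← Finset.sdiff_eq_empty_iff_subset]
          exact Finset.card_eq_zero.mp (by omega)
        · rw [← Finset.sdiff_eq_empty_iff_subset]
          exact Finset.card_eq_zero.mp (by omega)
      have hYeq : (f2 ⟨_, hrb t⟩).1 = (f2 ⟨_, hrb t'⟩).1 := by
        apply Finset.Subset.antisymm
        · rw [← Finset.sdiff_eq_empty_iff_subset]
          exact Finset.card_eq_zero.mp (by omega)
        · rw [← Finset.sdiff_eq_empty_iff_subset]
          exact Finset.card_eq_zero.mp (by omega)
      have hc : scol L1 (t.1 / (L1+2)) (t.1 % (L1+2)) =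
          scol L1 (t'.1 / (L1+2)) (t'.1 % (L1+2)) :=
        congrArg Fin.val (hbij1.1 (Subtype.ext hXeq))
      have hr : srow L1 (t.1 / (L1+2)) (t.1 % (L1+2)) =
          srow L1 (t'.1 / (L1+2)) (t'.1 % (L1+2)) :=
        congrArg Fin.val (hbij2.1 (Subtype.ext hYeq))
      obtain ⟨hb, ho⟩ := snake_inj (hmodt t.1) (hmodt t'.1) hc hr
      have ht := hdect t.1
      have ht' := hdect t'.1
      rw [hb, ho] at ht
      exact Fin.ext (ht.trans ht'.symm)
    · -- surjective
      rintro ⟨X, hX⟩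
      simp only [Finset.mem_image] at hX
      obtain ⟨t, -, ht⟩ := hX
      exact ⟨t, Subtype.ext ht⟩
    · -- adjacency
      intro t t'
      have ht := hdect t.1
      have ht' := hdect t'.1
      have ho := hmodt t.1
      have ho' := hmodt t'.1
      constructor
      · intro hadj
        have hA : (F t \ F t').card = 1 := hadj.1
        have hB : (F t' \ F t).card = 1 := hadj.2
        rw [hcard_sd t t'] at hA
        rw [hcard_sd t' t] at hB
        have hxc := hxcomm t t'
        have hyc := hycomm t t'
        have hsplit : (((f1 ⟨_, hcb t⟩).1 \ (f1 ⟨_, hcb t'⟩).1).card = 1 ∧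
            ((f2 ⟨_, hrb t⟩).1 \ (f2 ⟨_, hrb t'⟩).1).card = 0) ∨
            (((f1 ⟨_, hcb t⟩).1 \ (f1 ⟨_, hcb t'⟩).1).card = 0 ∧
            ((f2 ⟨_, hrb t⟩).1 \ (f2 ⟨_, hrb t'⟩).1).card = 1) := by omega
        apply (consec_iff ht ho ht' ho').mpr
        apply (snake_adj ho ho').mp
        rcases hsplit with ⟨hx1, hy0⟩ | ⟨hx0, hy1⟩
        · -- columns move, rows equal
          right
          have hAdjC1 : (adjGraph C1).Adj (f1 ⟨_, hcb t⟩) (f1 ⟨_, hcb t'⟩) :=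
            ⟨hx1, by omega⟩
          have hYeq : (f2 ⟨_, hrb t⟩).1 = (f2 ⟨_, hrb t'⟩).1 := by
            apply Finset.Subset.antisymm
            · rw [← Finset.sdiff_eq_empty_iff_subset]
              exact Finset.card_eq_zero.mp (by omega)
            · rw [← Finset.sdiff_eq_empty_iff_subset]
              exact Finset.card_eq_zero.mp (by omega)
          refine ⟨congrArg Fin.val (hbij2.1 (Subtype.ext hYeq)), ?_⟩
          have := (hadj1 _ _).mp hAdjC1
          exact this.symm.imp (fun h => h) (fun h => h)
        · -- rows move, columns equal
          left
          have hAdjC2 : (adjGraph C2).Adj (f2 ⟨_, hrb t⟩) (f2 ⟨_, hrb t'⟩) :=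
            ⟨hy1, by omega⟩
          have hXeq : (f1 ⟨_, hcb t⟩).1 = (f1 ⟨_, hcb t'⟩).1 := by
            apply Finset.Subset.antisymm
            · rw [← Finset.sdiff_eq_empty_iff_subset]
              exact Finset.card_eq_zero.mp (by omega)
            · rw [← Finset.sdiff_eq_empty_iff_subset]
              exact Finset.card_eq_zero.mp (by omega)
          refine ⟨congrArg Fin.val (hbij1.1 (Subtype.ext hXeq)), ?_⟩
          have := (hadj2 _ _).mp hAdjC2
          exact this.symm.imp (fun h => h) (fun h => h)
      · intro hcons
        have hgrid := (snake_adj ho ho').mpr ((consec_iff ht ho ht' ho').mp hcons)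
        rcases hgrid with ⟨hceq, hrowpm⟩ | ⟨hreq, hcolpm⟩
        · -- columns equal, rows adjacent
          have hXeq : (f1 ⟨_, hcb t⟩).1 = (f1 ⟨_, hcb t'⟩).1 :=
            congrArg (fun z => (f1 z).1) (Fin.ext hceq)
          have hAdjC2 : (adjGraph C2).Adj (f2 ⟨_, hrb t⟩) (f2 ⟨_, hrb t'⟩) :=
            (hadj2 _ _).mpr (hrowpm.symm.imp (fun h => h) (fun h => h))
          refine ⟨?_, ?_⟩
          · rw [hcard_sd t t', hXeq]
            simp only [Finset.sdiff_self, Finset.card_empty, Nat.zero_add]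
            exact hAdjC2.1
          · rw [hcard_sd t' t, hXeq]
            simp only [Finset.sdiff_self, Finset.card_empty, Nat.zero_add]
            exact hAdjC2.2
        · -- rows equal, columns adjacent
          have hYeq : (f2 ⟨_, hrb t⟩).1 = (f2 ⟨_, hrb t'⟩).1 :=
            congrArg (fun z => (f2 z).1) (Fin.ext hreq)
          have hAdjC1 : (adjGraph C1).Adj (f1 ⟨_, hcb t⟩) (f1 ⟨_, hcb t'⟩) :=
            (hadj1 _ _).mpr (hcolpm.symm.imp (fun h => h) (fun h => h))
          refine ⟨?_, ?_⟩
          · rw [hcard_sd t t', hYeq]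
            simp only [Finset.sdiff_self, Finset.card_empty, Nat.add_zero]
            exact hAdjC1.1
          · rw [hcard_sd t' t, hYeq]
            simp only [Finset.sdiff_self, Finset.card_empty, Nat.add_zero]
            exact hAdjC1.2
  · -- the length inequality
    rw [hL, hR]
    rcases L2 with _ | m
    · simp
    · have h2R : m ≤ 2 * ((m+1)/2) := by omega
      have hmul : m * (L1+2) ≤ (2 * ((m+1)/2)) * (L1+2) := Nat.mul_le_mul_right _ h2R
      have e1 : (2 * ((m+1)/2)) * (L1+2) = 2 * (((m+1)/2) * (L1+2)) := by ring
      have e2 : m * (L1+2) = m * L1 + 2 * m := by ring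
      have e3 : L1 * (m+1) = m * L1 + L1 := by ring
      omega

lemma corridor_relabel {V W : Type*} [DecidableEq V] [DecidableEq W] (e : V ↪ W)
    {C : Finset (Finset V)} {d L : ℕ} (hcard : ∀ X ∈ C, X.card = d) (hcor : Corridor C L) :
    ∃ C' : Finset (Finset W), (∀ X ∈ C', X.card = d) ∧ Corridor C' L := by
  classical
  obtain ⟨f, hbij, hadj⟩ := hcor
  refine ⟨C.image (Finset.map e), ?_, ?_⟩
  · intro X hX
    simp only [Finset.mem_image] at hX
    obtain ⟨Y, hY, rfl⟩ := hX
    rw [Finset.card_map]; exact hcard Y hY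
  · refine ⟨fun i => ⟨(f i).1.map e, Finset.mem_image_of_mem _ (f i).2⟩, ⟨?_, ?_⟩, ?_⟩
    · intro i j h
      have h2 := Finset.map_injective e (congrArg Subtype.val h)
      exact hbij.1 (Subtype.ext h2)
    · rintro ⟨X, hX⟩
      simp only [Finset.mem_image] at hX
      obtain ⟨Y, hY, rfl⟩ := hX
      obtain ⟨i, hi⟩ := hbij.2 ⟨Y, hY⟩
      exact ⟨i, Subtype.ext (show (f i).1.map e = Y.map e by rw [hi])⟩
    · intro i j
      have hsd : ∀ (X Y : Finset V), (X.map e \ Y.map e).card = (X \ Y).card := by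
        intro X Y
        rw [Finset.map_eq_image, Finset.map_eq_image, ← Finset.image_sdiff _ _ e.injective,
          Finset.card_image_of_injective _ e.injective]
      rw [← hadj i j]
      constructor
      · intro h
        exact ⟨by have := h.1; rwa [hsd] at this, by have := h.2; rwa [hsd] at this⟩
      · intro h
        exact ⟨by rw [hsd]; exact h.1, by rw [hsd]; exact h.2⟩

lemma Hs_aux (n d : ℕ) (hpos : 0 < Hs n d) : ∀ k : ℕ, 1 ≤ k →
    ∃ (C : Finset (Finset (Fin (k * n)))) (M : ℕ),
      (∀ X ∈ C, X.card = k * d) ∧ Corridor C M ∧ Hs n d ^ k ≤ 2 ^ (k - 1) * M := by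
  intro k
  induction k with
  | zero => omega
  | succ p ih =>
    intro _
    rcases Nat.eq_zero_or_pos p with rfl | hp
    · obtain ⟨C, hcard, hcor⟩ := exists_corridor_Hs hpos
      obtain ⟨C', hcard', hcor'⟩ :=
        corridor_relabel (finCongr (one_mul n).symm).toEmbedding hcard hcor
      exact ⟨C', Hs n d, fun X hX => by rw [hcard' X hX]; omega, hcor', by simp⟩
    · obtain ⟨C2, M, hcard2, hcor2, hle⟩ := ih hp
      obtain ⟨C1, hcard1, hcor1⟩ := exists_corridor_Hs hpos
      obtain ⟨C, LL, hcardC, hcorC, hLL⟩ := join_corridor hcard1 hcard2 hcor1 hcor2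
      obtain ⟨C', hcard', hcor'⟩ :=
        corridor_relabel (finCongr (by ring : n + p * n = (p+1) * n)).toEmbedding hcardC hcorC
      refine ⟨C', LL, fun X hX => by rw [hcard' X hX]; ring, hcor', ?_⟩
      have hp1 : p - 1 + 1 = p := by omega
      calc Hs n d ^ (p+1) = Hs n d ^ p * Hs n d := by ring
        _ ≤ (2^(p-1) * M) * Hs n d := Nat.mul_le_mul_right _ hle
        _ = 2^(p-1) * (Hs n d * M) := by ring
        _ ≤ 2^(p-1) * (2 * LL) := Nat.mul_le_mul_left _ hLL
        _ = 2^(p-1+1) * LL := by rw [pow_succ]; ring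
        _ = 2^((p+1)-1) * LL := by rw [hp1, Nat.add_sub_cancel]


/-- For all positive integers `n`, `d`, `k`:
`H_s(kn, kd) ≥ H_s(n,d)^k / 2^{k−1}`. -/
theorem Hs_join_power_bound (n d k : ℕ) (hn : 1 ≤ n) (hd : 1 ≤ d) (hk : 1 ≤ k) :
    Hs n d ^ k ≤ 2 ^ (k - 1) * Hs (k * n) (k * d) := by
  rcases Nat.eq_zero_or_pos (Hs n d) with h0 | hpos
  · rw [h0, zero_pow (by omega)]
    exact Nat.zero_le _
  · obtain ⟨C, M, hcard, hcor, hle⟩ := Hs_aux n d hpos k hk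
    have hM : M ≤ Hs (k*n) (k*d) := le_Hs C hcard hcor
    calc Hs n d ^ k ≤ 2^(k-1) * M := hle
      _ ≤ 2^(k-1) * Hs (k*n) (k*d) := Nat.mul_le_mul_left _ hM
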